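/- Let X > 0, 0 < b < X, a = X − b, V₊ > 0, and let 0 < E < V₊. Set Q = √(V₊ − E) and K = √E, and let k ∈ ℝ. Suppose ψ : ℝ → ℂ is continuously differentiable, not identically zero, satisfies the quasi-periodicity conditions ψ(x + X) = e^{ikX} ψ(x) and ψ'(x + X) = e^{ikX} ψ'(x) for all x ∈ ℝ, is twice differentiable on (0, b) with ψ''(x) = (V₊ − E) ψ(x) there, and is twice differentiable on (b, X) with ψ''(x) = −E ψ(x) there. Then ((Q² − K²)/(2QK)) · sinh(Qb) · sin(Ka) + cosh(Qb) · cos(Ka) = cos(Xk). -/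

import Mathlib

open Set

private lemma kp_hasDerivAt_re {f : ℝ → ℂ} {c : ℂ} {x : ℝ} (hf : HasDerivAt f c x) :
    HasDerivAt (fun t => (f t).re) c.re x := by
  exact Complex.reCLM.hasFDerivAt.comp_hasDerivAt x hf

private lemma kp_hasDerivAt_im {f : ℝ → ℂ} {c : ℂ} {x : ℝ} (hf : HasDerivAt f c x) :
    HasDerivAt (fun t => (f t).im) c.im x := by
  exact Complex.imCLM.hasFDerivAt.comp_hasDerivAt x hf

private lemma kp_const_real {f : ℝ → ℝ} {p q : ℝ} (hpq : p ≤ q)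
    (hc : ContinuousOn f (Icc p q))
    (hd : ∀ x ∈ Ioo p q, HasDerivAt f 0 x) : f q = f p := by
  rcases eq_or_lt_of_le hpq with h | h
  · rw [h]
  · obtain ⟨c, hc', hceq⟩ := exists_hasDerivAt_eq_slope f (fun _ => 0) h hc hd
    have h0 : (0:ℝ) = (f q - f p) / (q - p) := by simpa using hceq
    have hne : q - p ≠ 0 := sub_ne_zero.2 h.ne'
    field_simp at h0
    linarith

private lemma kp_const_cx {f : ℝ → ℂ} {p q : ℝ} (hpq : p ≤ q)
    (hc : ContinuousOn f (Icc p q))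
    (hd : ∀ x ∈ Ioo p q, HasDerivAt f 0 x) : f q = f p := by
  have hre := kp_const_real hpq (Complex.continuous_re.comp_continuousOn hc)
    (fun x hx => by simpa [Function.comp_def] using kp_hasDerivAt_re (hd x hx))
  have him := kp_const_real hpq (Complex.continuous_im.comp_continuousOn hc)
    (fun x hx => by simpa [Function.comp_def] using kp_hasDerivAt_im (hd x hx))
  exact Complex.ext hre him

private lemma kp_comb_deriv (m μ : ℂ) (hm : m ^ 2 = μ) (ψ ψ' : ℝ → ℂ) (x : ℝ)
    (h1 : HasDerivAt ψ (ψ' x) x) (h2 : HasDerivAt ψ' (μ * ψ x) x) :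
    HasDerivAt (fun t : ℝ => Complex.exp (-(m * t)) * (ψ' t + m * ψ t)) 0 x := by
  have hlin : HasDerivAt (fun t : ℝ => -(m * (t : ℂ))) (-m) x := by
    exact ((Complex.ofRealCLM.hasDerivAt (x := x)).const_mul m).neg.congr_deriv (by simp)
  have hexp : HasDerivAt (fun t : ℝ => Complex.exp (-(m * t)))
      (Complex.exp (-(m * x)) * (-m)) x := hlin.cexp
  have h3 : HasDerivAt (fun t : ℝ => ψ' t + m * ψ t) (μ * ψ x + m * ψ' x) x :=
    h2.add (h1.const_mul m)
  have := hexp.mul h3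
  refine this.congr_deriv ?_
  rw [← hm]; ring

private lemma kp_transfer (m μ : ℂ) (hm : m ^ 2 = μ) (p q : ℝ) (hpq : p ≤ q)
    (ψ ψ' : ℝ → ℂ) (hψ : Continuous ψ) (hder : ∀ x, HasDerivAt ψ (ψ' x) x)
    (hcont : Continuous ψ')
    (hode : ∀ x ∈ Set.Ioo p q, HasDerivAt ψ' (μ * ψ x) x) :
    Complex.exp (-(m * q)) * (ψ' q + m * ψ q)
      = Complex.exp (-(m * p)) * (ψ' p + m * ψ p) := by
  have hu : Continuous fun t : ℝ => Complex.exp (-(m * t)) * (ψ' t + m * ψ t) := by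
    fun_prop
  exact kp_const_cx hpq hu.continuousOn
    (fun x hx => kp_comb_deriv m μ hm ψ ψ' x (hder x) (hode x hx))

private lemma kp_unexp {z w u : ℂ} (h : Complex.exp (-z) * w = u) :
    w = Complex.exp z * u := by
  rw [← h, ← mul_assoc, ← Complex.exp_add]
  simp

set_option maxHeartbeats 1000000 in
theorem kronig_penney_dispersion
    (X b Vp E k : ℝ) (hX : 0 < X) (hb : 0 < b) (hbX : b < X)
    (a : ℝ) (ha : a = X - b) (hVp : 0 < Vp) (hE : 0 < E) (hEV : E < Vp)
    (Q K : ℝ) (hQ : Q = Real.sqrt (Vp - E)) (hK : K = Real.sqrt E)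
    (ψ ψ' : ℝ → ℂ)
    (hder : ∀ x, HasDerivAt ψ (ψ' x) x) (hcont : Continuous ψ')
    (hne : ∃ x, ψ x ≠ 0)
    (hqp : ∀ x : ℝ, ψ (x + X) = Complex.exp (Complex.I * k * X) * ψ x)
    (hqp' : ∀ x : ℝ, ψ' (x + X) = Complex.exp (Complex.I * k * X) * ψ' x)
    (hode1 : ∀ x ∈ Set.Ioo 0 b, HasDerivAt ψ' (((Vp - E : ℝ) : ℂ) * ψ x) x)
    (hode2 : ∀ x ∈ Set.Ioo b X, HasDerivAt ψ' ((-(E : ℝ) : ℂ) * ψ x) x) :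
    (Q ^ 2 - K ^ 2) / (2 * Q * K) * Real.sinh (Q * b) * Real.sin (K * a)
      + Real.cosh (Q * b) * Real.cos (K * a) = Real.cos (X * k) := by
  have hψc : Continuous ψ := continuous_iff_continuousAt.2 fun x => (hder x).continuousAt
  have hVE : 0 < Vp - E := by linarith
  have hQpos : 0 < Q := hQ ▸ Real.sqrt_pos.2 hVE
  have hKpos : 0 < K := hK ▸ Real.sqrt_pos.2 hE
  have hQ2 : Q ^ 2 = Vp - E := by rw [hQ]; exact Real.sq_sqrt hVE.le
  have hK2 : K ^ 2 = E := by rw [hK]; exact Real.sq_sqrt hE.le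
  have hm1 : ((Q : ℂ)) ^ 2 = ((Vp - E : ℝ) : ℂ) := by
    rw [← hQ2]; push_cast; ring
  have hm2 : (-(Q : ℂ)) ^ 2 = ((Vp - E : ℝ) : ℂ) := by rw [neg_pow]; simpa using hm1
  have hm3 : ((K : ℂ) * Complex.I) ^ 2 = ((-E : ℝ) : ℂ) := by
    rw [mul_pow, Complex.I_sq, ← hK2]; push_cast; ring
  have hm4 : (-((K : ℂ) * Complex.I)) ^ 2 = ((-E : ℝ) : ℂ) := by rw [neg_pow]; simpa using hm3
  have hQne : (Q : ℂ) ≠ 0 := Complex.ofReal_ne_zero.2 hQpos.ne'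
  have hKne : (K : ℂ) ≠ 0 := Complex.ofReal_ne_zero.2 hKpos.ne'
  have hLne : Complex.exp (Complex.I * k * X) ≠ 0 := Complex.exp_ne_zero _
  -- hode2 with μ rewritten
  have hode2' : ∀ x ∈ Set.Ioo b X, HasDerivAt ψ' (((-E : ℝ) : ℂ) * ψ x) x := by
    intro x hx; exact_mod_cast hode2 x hx
  -- the solution vanishing argument -----------------------------------------
  have hnz : ¬ (ψ 0 = 0 ∧ ψ' 0 = 0) := by
    rintro ⟨h0, h0'⟩
    have hv1 : ∀ x ∈ Set.Icc (0:ℝ) b, ψ x = 0 ∧ ψ' x = 0 := by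
      intro x hx
      have hsub : ∀ y ∈ Set.Ioo (0:ℝ) x, HasDerivAt ψ' (((Vp - E : ℝ) : ℂ) * ψ y) y :=
        fun y hy => hode1 y ⟨hy.1, lt_of_lt_of_le hy.2 hx.2⟩
      have t1 := kp_transfer (Q:ℂ) _ hm1 0 x hx.1 ψ ψ' hψc hder hcont hsub
      have t2 := kp_transfer (-(Q:ℂ)) _ hm2 0 x hx.1 ψ ψ' hψc hder hcont hsub
      simp only [Complex.ofReal_zero, mul_zero, neg_zero, Complex.exp_zero, one_mul,
        h0, h0', add_zero, zero_add, neg_mul] at t1 t2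
      have t1' : ψ' x + (Q:ℂ) * ψ x = 0 :=
        (mul_eq_zero.1 t1).resolve_left (Complex.exp_ne_zero _)
      have t2'' := (mul_eq_zero.1 t2).resolve_left (Complex.exp_ne_zero _)
      have t2' : ψ' x - (Q:ℂ) * ψ x = 0 := by linear_combination t2''
      constructor
      · have h2 : (2 * (Q:ℂ)) * ψ x = 0 := by linear_combination t1' - t2'
        have := mul_eq_zero.1 h2
        rcases this with h | h
        · exact absurd h (by simpa using hQne)
        · exact h
      · have h2 : (2 : ℂ) * ψ' x = 0 := by linear_combination t1' + t2'
        have := mul_eq_zero.1 h2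
        rcases this with h | h
        · norm_num at h
        · exact h
    have hb0 : ψ b = 0 := (hv1 b ⟨hb.le, le_refl b⟩).1
    have hb0' : ψ' b = 0 := (hv1 b ⟨hb.le, le_refl b⟩).2
    have hv2 : ∀ x ∈ Set.Icc b X, ψ x = 0 := by
      intro x hx
      have hsub : ∀ y ∈ Set.Ioo b x, HasDerivAt ψ' (((-E : ℝ) : ℂ) * ψ y) y :=
        fun y hy => hode2' y ⟨hy.1, lt_of_lt_of_le hy.2 hx.2⟩
      have t3 := kp_transfer ((K:ℂ) * Complex.I) _ hm3 b x hx.1 ψ ψ' hψc hder hcont hsub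
      have t4 := kp_transfer (-((K:ℂ) * Complex.I)) _ hm4 b x hx.1 ψ ψ' hψc hder hcont hsub
      simp only [hb0, hb0', mul_zero, add_zero, zero_add, neg_mul] at t3 t4
      have t3' := (mul_eq_zero.1 t3).resolve_left (Complex.exp_ne_zero _)
      have t4'' := (mul_eq_zero.1 t4).resolve_left (Complex.exp_ne_zero _)
      have t4' : ψ' x - (K:ℂ) * Complex.I * ψ x = 0 := by linear_combination t4''
      have h2 : (2 * ((K:ℂ) * Complex.I)) * ψ x = 0 := by linear_combination t3' - t4'
      rcases mul_eq_zero.1 h2 with h | h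
      · exact absurd h (by simp [hKne, Complex.I_ne_zero])
      · exact h
    have hvX : ∀ x ∈ Set.Icc (0:ℝ) X, ψ x = 0 := by
      intro x hx
      by_cases hxb : x ≤ b
      · exact (hv1 x ⟨hx.1, hxb⟩).1
      · exact hv2 x ⟨le_of_not_ge hxb, hx.2⟩
    have hper : ∀ n : ℤ, ∀ x : ℝ,
        ψ (x + (n : ℝ) * X) = (Complex.exp (Complex.I * k * X)) ^ n * ψ x := by
      intro n
      induction n using Int.induction_on with
      | zero => intro x; simp
      | succ n ih =>
        intro x
        have h1 := hqp (x + ((n : ℤ) : ℝ) * X)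
        have h2 : x + ((n : ℤ) : ℝ) * X + X = x + (((n : ℤ) + 1 : ℤ) : ℝ) * X := by
          push_cast; ring
        rw [h2, ih x] at h1
        rw [h1, zpow_add_one₀ hLne]
        ring
      | pred n ih =>
        intro x
        have h1 := hqp (x + ((-(n:ℤ) - 1 : ℤ) : ℝ) * X)
        have h2 : x + ((-(n:ℤ) - 1 : ℤ) : ℝ) * X + X = x + ((-(n:ℤ) : ℤ) : ℝ) * X := by
          push_cast; ring
        rw [h2, ih x] at h1
        have h4 : ψ (x + ((-(n:ℤ) - 1 : ℤ) : ℝ) * X)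
            = (Complex.exp (Complex.I * k * X))⁻¹
              * ((Complex.exp (Complex.I * k * X)) ^ (-(n:ℤ)) * ψ x) :=
          (eq_inv_mul_iff_mul_eq₀ hLne).2 h1.symm
        rw [h4, zpow_sub_one₀ hLne]
        ring
    obtain ⟨x₀, hx₀⟩ := hne
    apply hx₀
    have hfl1 : 0 ≤ x₀ - (⌊x₀ / X⌋ : ℝ) * X := Int.sub_floor_div_mul_nonneg x₀ hX
    have hfl2 : x₀ - (⌊x₀ / X⌋ : ℝ) * X < X := Int.sub_floor_div_mul_lt x₀ hX
    have hp := hper ⌊x₀ / X⌋ (x₀ - (⌊x₀ / X⌋ : ℝ) * X)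
    rw [hvX _ ⟨hfl1, hfl2.le⟩, mul_zero, sub_add_cancel] at hp
    exact hp
  -- transfer equations -------------------------------------------------------
  have T1 := kp_transfer (Q:ℂ) _ hm1 0 b hb.le ψ ψ' hψc hder hcont hode1
  have T2 := kp_transfer (-(Q:ℂ)) _ hm2 0 b hb.le ψ ψ' hψc hder hcont hode1
  have T3 := kp_transfer ((K:ℂ) * Complex.I) _ hm3 b X hbX.le ψ ψ' hψc hder hcont hode2'
  have T4 := kp_transfer (-((K:ℂ) * Complex.I)) _ hm4 b X hbX.le ψ ψ' hψc hder hcont hode2'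
  simp only [Complex.ofReal_zero, mul_zero, neg_zero, Complex.exp_zero, one_mul] at T1 T2
  have F1 := kp_unexp T1
  have F2 := kp_unexp T2
  have F3 := kp_unexp T3
  have F4 := kp_unexp T4
  rw [show (-(Q:ℂ)) * (b:ℂ) = -((Q:ℂ) * (b:ℂ)) by ring] at F2
  -- combine the exponentials for the second interval
  have hcomb3 : Complex.exp ((K:ℂ) * Complex.I * (X:ℂ))
      * Complex.exp (-((K:ℂ) * Complex.I * (b:ℂ)))
      = Complex.exp ((K:ℂ) * Complex.I * (a:ℂ)) := by
    rw [← Complex.exp_add]; congr 1; rw [ha]; push_cast; ring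
  have hcomb4 : Complex.exp (-((K:ℂ) * Complex.I) * (X:ℂ))
      * Complex.exp (-(-((K:ℂ) * Complex.I) * (b:ℂ)))
      = Complex.exp (-((K:ℂ) * Complex.I * (a:ℂ))) := by
    rw [← Complex.exp_add]; congr 1; rw [ha]; push_cast; ring
  rw [← mul_assoc, hcomb3] at F3
  rw [← mul_assoc, hcomb4] at F4
  -- hyperbolic / trigonometric form of the exponentials
  have heQp : Complex.exp ((Q:ℂ) * (b:ℂ))
      = ((Real.cosh (Q*b) : ℝ) : ℂ) + ((Real.sinh (Q*b) : ℝ) : ℂ) := by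
    have h := Real.cosh_add_sinh (Q*b)
    have h2 : Complex.exp ((Q:ℂ) * (b:ℂ)) = ((Real.exp (Q*b) : ℝ) : ℂ) := by
      rw [Complex.ofReal_exp]; push_cast; ring_nf
    rw [h2, ← h]; push_cast; ring
  have heQm : Complex.exp (-((Q:ℂ) * (b:ℂ)))
      = ((Real.cosh (Q*b) : ℝ) : ℂ) - ((Real.sinh (Q*b) : ℝ) : ℂ) := by
    have h := Real.cosh_sub_sinh (Q*b)
    have h2 : Complex.exp (-((Q:ℂ) * (b:ℂ))) = ((Real.exp (-(Q*b)) : ℝ) : ℂ) := by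
      rw [Complex.ofReal_exp]; push_cast; ring_nf
    rw [h2, ← h]; push_cast; ring
  have hzp : Complex.exp ((K:ℂ) * Complex.I * (a:ℂ))
      = ((Real.cos (K*a) : ℝ) : ℂ) + ((Real.sin (K*a) : ℝ) : ℂ) * Complex.I := by
    have h := Complex.exp_mul_I ((K*a : ℝ) : ℂ)
    rw [show (K:ℂ) * Complex.I * (a:ℂ) = ((K*a : ℝ) : ℂ) * Complex.I by push_cast; ring,
      h, ← Complex.ofReal_cos, ← Complex.ofReal_sin]
  have hzm : Complex.exp (-((K:ℂ) * Complex.I * (a:ℂ)))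
      = ((Real.cos (K*a) : ℝ) : ℂ) - ((Real.sin (K*a) : ℝ) : ℂ) * Complex.I := by
    have h := Complex.exp_mul_I ((-(K*a) : ℝ) : ℂ)
    rw [show -((K:ℂ) * Complex.I * (a:ℂ)) = ((-(K*a) : ℝ) : ℂ) * Complex.I by push_cast; ring,
      h]
    push_cast
    rw [Complex.cos_neg, Complex.sin_neg]
    ring
  rw [heQp] at F1
  rw [heQm] at F2
  rw [hzp] at F3
  rw [hzm] at F4
  -- Bloch conditions at X
  have hX0 : ψ X = Complex.exp (Complex.I * k * X) * ψ 0 := by simpa using hqp 0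
  have hX0' : ψ' X = Complex.exp (Complex.I * k * X) * ψ' 0 := by simpa using hqp' 0
  rw [hX0, hX0'] at F3 F4
  -- abbreviations
  set α := ψ 0 with hαdef
  set β := ψ' 0 with hβdef
  set P := ψ b with hPdef
  set R := ψ' b with hRdef
  set ch := Real.cosh (Q*b) with hchdef
  set sh := Real.sinh (Q*b) with hshdef
  set c := Real.cos (K*a) with hcdef
  set s := Real.sin (K*a) with hsdef
  set L := Complex.exp (Complex.I * k * X) with hLdef
  -- solve on the first interval
  have HP : (Q:ℂ) * P = (Q:ℂ) * (ch:ℂ) * α + (sh:ℂ) * β := by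
    linear_combination (F1 - F2) / 2
  have HR : R = (Q:ℂ) * (sh:ℂ) * α + (ch:ℂ) * β := by
    linear_combination (F1 + F2) / 2
  -- solve on the second interval
  have hI : Complex.I ^ 2 = -1 := Complex.I_sq
  have HG1' : Complex.I * ((K:ℂ) * L * α) = Complex.I * ((K:ℂ) * (c:ℂ) * P + (s:ℂ) * R) := by
    linear_combination (F3 - F4) / 2
  have HG1 := mul_left_cancel₀ Complex.I_ne_zero HG1'
  have HG2 : L * β = (c:ℂ) * R - (K:ℂ) * (s:ℂ) * P := by
    linear_combination (F3 + F4) / 2 + ((K:ℂ) * (s:ℂ) * P) * hI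
  -- eigen equations
  have G1 : (Q:ℂ) * (K:ℂ) * L * α
      = ((Q:ℂ)*(K:ℂ)*(ch:ℂ)*(c:ℂ) + (Q:ℂ)^2*(sh:ℂ)*(s:ℂ)) * α
        + ((K:ℂ)*(sh:ℂ)*(c:ℂ) + (Q:ℂ)*(ch:ℂ)*(s:ℂ)) * β := by
    linear_combination (Q:ℂ) * HG1 + (K:ℂ) * (c:ℂ) * HP + (Q:ℂ) * (s:ℂ) * HR
  have G2 : (Q:ℂ) * L * β
      = ((Q:ℂ)^2*(sh:ℂ)*(c:ℂ) - (Q:ℂ)*(K:ℂ)*(ch:ℂ)*(s:ℂ)) * α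
        + ((Q:ℂ)*(ch:ℂ)*(c:ℂ) - (K:ℂ)*(sh:ℂ)*(s:ℂ)) * β := by
    linear_combination (Q:ℂ) * HG2 + (Q:ℂ) * (c:ℂ) * HR - (K:ℂ) * (s:ℂ) * HP
  -- characteristic equation
  have hchar : ((Q:ℂ)*(K:ℂ)*L - ((Q:ℂ)*(K:ℂ)*(ch:ℂ)*(c:ℂ) + (Q:ℂ)^2*(sh:ℂ)*(s:ℂ)))
      * ((Q:ℂ)*L - ((Q:ℂ)*(ch:ℂ)*(c:ℂ) - (K:ℂ)*(sh:ℂ)*(s:ℂ)))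
      = ((K:ℂ)*(sh:ℂ)*(c:ℂ) + (Q:ℂ)*(ch:ℂ)*(s:ℂ))
        * ((Q:ℂ)^2*(sh:ℂ)*(c:ℂ) - (Q:ℂ)*(K:ℂ)*(ch:ℂ)*(s:ℂ)) := by
    have h1 : ((Q:ℂ)*(K:ℂ)*L - ((Q:ℂ)*(K:ℂ)*(ch:ℂ)*(c:ℂ) + (Q:ℂ)^2*(sh:ℂ)*(s:ℂ))) * α
        = ((K:ℂ)*(sh:ℂ)*(c:ℂ) + (Q:ℂ)*(ch:ℂ)*(s:ℂ)) * β := by linear_combination G1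
    have h2 : ((Q:ℂ)*L - ((Q:ℂ)*(ch:ℂ)*(c:ℂ) - (K:ℂ)*(sh:ℂ)*(s:ℂ))) * β
        = ((Q:ℂ)^2*(sh:ℂ)*(c:ℂ) - (Q:ℂ)*(K:ℂ)*(ch:ℂ)*(s:ℂ)) * α := by linear_combination G2
    by_cases hA : α = 0
    · have hB : β ≠ 0 := fun h => hnz ⟨hA, h⟩
      have h12 : ((K:ℂ)*(sh:ℂ)*(c:ℂ) + (Q:ℂ)*(ch:ℂ)*(s:ℂ)) = 0 := by
        have := h1
        rw [hA] at this
        simpa [hB] using this.symm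
      have h22 : ((Q:ℂ)*L - ((Q:ℂ)*(ch:ℂ)*(c:ℂ) - (K:ℂ)*(sh:ℂ)*(s:ℂ))) = 0 := by
        have := h2
        rw [hA] at this
        simp only [mul_zero] at this
        exact (mul_eq_zero.1 this).resolve_right hB
      rw [h12, h22]; ring
    · by_cases hB : β = 0
      · have h11 : ((Q:ℂ)*(K:ℂ)*L - ((Q:ℂ)*(K:ℂ)*(ch:ℂ)*(c:ℂ) + (Q:ℂ)^2*(sh:ℂ)*(s:ℂ))) = 0 := by
          have := h1
          rw [hB] at this
          simp only [mul_zero] at this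
          exact (mul_eq_zero.1 this).resolve_right hA
        have h21 : ((Q:ℂ)^2*(sh:ℂ)*(c:ℂ) - (Q:ℂ)*(K:ℂ)*(ch:ℂ)*(s:ℂ)) = 0 := by
          have := h2
          rw [hB] at this
          simpa [hA] using this.symm
        rw [h11, h21]; ring
      · have hmm : α * β * (((Q:ℂ)*(K:ℂ)*L - ((Q:ℂ)*(K:ℂ)*(ch:ℂ)*(c:ℂ) + (Q:ℂ)^2*(sh:ℂ)*(s:ℂ)))
            * ((Q:ℂ)*L - ((Q:ℂ)*(ch:ℂ)*(c:ℂ) - (K:ℂ)*(sh:ℂ)*(s:ℂ)))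
            - ((K:ℂ)*(sh:ℂ)*(c:ℂ) + (Q:ℂ)*(ch:ℂ)*(s:ℂ))
              * ((Q:ℂ)^2*(sh:ℂ)*(c:ℂ) - (Q:ℂ)*(K:ℂ)*(ch:ℂ)*(s:ℂ))) = 0 := by
          linear_combination (((Q:ℂ)*L - ((Q:ℂ)*(ch:ℂ)*(c:ℂ) - (K:ℂ)*(sh:ℂ)*(s:ℂ))) * β) * h1
            + (((K:ℂ)*(sh:ℂ)*(c:ℂ) + (Q:ℂ)*(ch:ℂ)*(s:ℂ)) * β) * h2
        have := (mul_eq_zero.1 hmm).resolve_left (mul_ne_zero hA hB)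
        linear_combination this
  -- determinant identity
  have hdetR : (Q*K*ch*c + Q^2*sh*s)*(Q*ch*c - K*sh*s)
      - (K*sh*c + Q*ch*s)*(Q^2*sh*c - Q*K*ch*s) = Q^2*K := by
    have h1 : ch^2 - sh^2 = 1 := Real.cosh_sq_sub_sinh_sq (Q*b)
    have h2 : s^2 + c^2 = 1 := Real.sin_sq_add_cos_sq (K*a)
    linear_combination (Q^2*K*(s^2+c^2))*h1 + (Q^2*K)*h2
  have hdetC : ((Q:ℂ)*(K:ℂ)*(ch:ℂ)*(c:ℂ) + (Q:ℂ)^2*(sh:ℂ)*(s:ℂ))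
      * ((Q:ℂ)*(ch:ℂ)*(c:ℂ) - (K:ℂ)*(sh:ℂ)*(s:ℂ))
      - ((K:ℂ)*(sh:ℂ)*(c:ℂ) + (Q:ℂ)*(ch:ℂ)*(s:ℂ))
        * ((Q:ℂ)^2*(sh:ℂ)*(c:ℂ) - (Q:ℂ)*(K:ℂ)*(ch:ℂ)*(s:ℂ)) = (Q:ℂ)^2*(K:ℂ) := by
    exact_mod_cast congrArg (fun t : ℝ => (t : ℂ)) hdetR
  -- quadratic equation for the Bloch multiplier
  have hθ : L = Complex.exp (((X*k : ℝ) : ℂ) * Complex.I) := by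
    rw [hLdef]; congr 1; push_cast; ring
  have hsum : L + Complex.exp (-((X*k : ℝ) : ℂ) * Complex.I)
      = 2 * ((Real.cos (X*k) : ℝ) : ℂ) := by
    rw [hθ, Complex.exp_mul_I, Complex.exp_mul_I, Complex.cos_neg, Complex.sin_neg,
      ← Complex.ofReal_cos]
    ring
  have hLinv : L * Complex.exp (-((X*k : ℝ) : ℂ) * Complex.I) = 1 := by
    rw [hθ, ← Complex.exp_add,
      show ((X*k : ℝ) : ℂ) * Complex.I + -((X*k : ℝ) : ℂ) * Complex.I = 0 by ring,
      Complex.exp_zero]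
  have hLne' : L ≠ 0 := hLdef ▸ hLne
  have hquad : L^2 + 1 = (2 * ((Real.cos (X*k) : ℝ) : ℂ)) * L := by
    linear_combination L * hsum - hLinv
  -- put everything together
  have hkey : (((Q:ℂ)^2*(K:ℂ)) * (2 * ((Real.cos (X*k) : ℝ) : ℂ))) * L
      = ((Q:ℂ)*(K:ℂ)*((Q:ℂ)*(ch:ℂ)*(c:ℂ) - (K:ℂ)*(sh:ℂ)*(s:ℂ))
        + (Q:ℂ)*((Q:ℂ)*(K:ℂ)*(ch:ℂ)*(c:ℂ) + (Q:ℂ)^2*(sh:ℂ)*(s:ℂ))) * L := by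
    linear_combination hchar - hdetC - (Q:ℂ)^2*(K:ℂ) * hquad
  have hcress := mul_right_cancel₀ hLne' hkey
  have hrealC : (((Q^2*K) * (2 * Real.cos (X*k)) : ℝ) : ℂ)
      = ((Q*K*(Q*ch*c - K*sh*s) + Q*(Q*K*ch*c + Q^2*sh*s) : ℝ) : ℂ) := by
    exact_mod_cast hcress
  have hreal : (Q^2*K) * (2 * Real.cos (X*k))
      = Q*K*(Q*ch*c - K*sh*s) + Q*(Q*K*ch*c + Q^2*sh*s) :=
    Complex.ofReal_inj.1 hrealC
  have hreal2 : (2*Q*K) * Real.cos (X*k) = (2*Q*K)*(ch*c) + (Q^2-K^2)*(sh*s) :=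
    mul_left_cancel₀ hQpos.ne' (by linear_combination hreal)
  have h2QK : 2*Q*K ≠ 0 := by positivity
  field_simp
  linear_combination -hreal2
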